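/- arXiv:2407.06471 — 4 statements merged into one kernel-verified Lean document; each statement's English description precedes it below -/
import Mathlib

section
/- Let q be a composition of n and μ a partition of n. If the Young character value φ^q(μ) is nonzero, then μ is a weak refinement of q, i.e. μ ≼ q. -/
open scoped Classical TensorProduct

namespace Descent

/-- A list of positive integers summing to `n`: a composition of `n`. -/
def IsComposition (n : ℕ) (l : List ℕ) : Prop :=
  (∀ x ∈ l, 0 < x) ∧ l.sum = n

/-- `Xi F n q` is the element `Ξ^q` of the group algebra `F[S_n]`: the sum of the
minimal-length representatives of the right cosets of the Young subgroup `S_q` in `S_n`,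
i.e. the sum of all permutations that are increasing on each of the consecutive intervals
of lengths `q₀, q₁, …`. -/
noncomputable def Xi (O : Type) [CommRing O] (n : ℕ) (l : List ℕ) :
    MonoidAlgebra O (Equiv.Perm (Fin n)) :=
  ∑ σ ∈ Finset.univ.filter (fun σ : Equiv.Perm (Fin n) =>
      ∀ i j : Fin n, i < j →
        (∃ k, (l.take k).sum ≤ (i : ℕ) ∧ (j : ℕ) < (l.take (k + 1)).sum) →
        σ i < σ j),
    MonoidAlgebra.single σ 1

/-- The descent algebra `D_n(O)`: the unital subalgebra of `O[S_n]` generated by the elements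
`Ξ^q`, for `q` a composition of `n`; by Solomon's theorem it coincides with their `O`-linear
span. -/
noncomputable def descentAlgebra (O : Type) [CommRing O] (n : ℕ) :
    Subalgebra O (MonoidAlgebra O (Equiv.Perm (Fin n))) :=
  Algebra.adjoin O {x | ∃ l, IsComposition n l ∧ x = Xi O n l}

theorem xi_mem {O : Type} [CommRing O] {n : ℕ} {l : List ℕ} (hl : IsComposition n l) :
    Xi O n l ∈ descentAlgebra O n :=
  Algebra.subset_adjoin ⟨l, hl, rfl⟩

/-- A partition of `n`: a weakly decreasing composition of `n`. -/
def IsPartition (n : ℕ) (l : List ℕ) : Prop :=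
  IsComposition n l ∧ l.Pairwise (· ≥ ·)

/-- A partition is `p`-regular if no part occurs `p` or more times. -/
def IsPRegular (p : ℕ) (l : List ℕ) : Prop :=
  ∀ x ∈ l, l.count x < p

/-- The Young character value `φ^q(μ)`: the number of functions `f` from the (indices of the)
parts of `μ` to the (indices of the) parts of `q` such that, for every `j`, the parts of `μ`
mapped to `j` sum to `q_j`. -/
noncomputable def youngChar (q μ : List ℕ) : ℕ :=
  (Finset.univ.filter (fun f : Fin μ.length → Fin q.length =>
    ∀ j : Fin q.length,
      (∑ i ∈ Finset.univ.filter (fun i => f i = j), μ.get i) = q.get j)).card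

/-- `r` is a (strong) refinement of `q` if `r` splits into consecutive blocks whose entries
sum to the successive parts of `q`. -/
def IsRefinement (r q : List ℕ) : Prop :=
  ∃ rs : List (List ℕ), rs.flatten = r ∧ rs.map List.sum = q

/-- `r` is a weak refinement of `q`, written `r ≼ q`: some rearrangement of `r` is a
refinement of `q`. -/
def IsWeakRefinement (r q : List ℕ) : Prop :=
  ∃ r' : List ℕ, r'.Perm r ∧ IsRefinement r' q

private theorem sum_map_filter_eq {α : Type*} (l : List α) (p : α → Prop) [DecidablePred p]
    (g : α → ℕ) :
    ((l.filter (fun i => p i)).map g).sum = (l.map (fun i => if p i then g i else 0)).sum := by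
  induction l with
  | nil => rfl
  | cons a l ih =>
    by_cases h : p a <;> simp [List.filter_cons, h, ih]

/-- If `q` is a composition of `n`, `μ` a partition of `n`, and the Young character value
`φ^q(μ)` is nonzero, then `μ` is a weak refinement of `q`, i.e. `μ ≼ q`. -/
theorem isWeakRefinement_of_youngChar_ne_zero (n : ℕ) (q μ : List ℕ)
    (hq : IsComposition n q) (hμ : IsPartition n μ) (h : youngChar q μ ≠ 0) :
    IsWeakRefinement μ q := by
  rw [youngChar] at h
  obtain ⟨f, hf⟩ := Finset.card_ne_zero.mp h
  rw [Finset.mem_filter] at hf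
  have hf' := hf.2
  set rs : List (List ℕ) :=
    (List.finRange q.length).map
      (fun j => ((List.finRange μ.length).filter (fun i => f i = j)).map μ.get) with hrs
  have hblock : ∀ j : Fin q.length,
      ((((List.finRange μ.length).filter (fun i => f i = j)).map μ.get)).sum
        = ∑ i ∈ Finset.univ.filter (fun i => f i = j), μ.get i := by
    intro j
    rw [Finset.sum_filter, Fin.sum_univ_def, sum_map_filter_eq]
  refine ⟨rs.flatten, ?_, rs, rfl, ?_⟩
  · -- permutation
    have hperm : ((List.finRange q.length).flatMap
        (fun j => (List.finRange μ.length).filter (fun i => f i = j))).Perm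
        (List.finRange μ.length) := by
      rw [List.perm_iff_count]
      intro i
      rw [List.count_flatMap]
      simp only [Function.comp_def]
      have hc : (fun j => ((List.finRange μ.length).filter (fun i' => f i' = j)).count i)
          = fun j => if f i = j then 1 else 0 := by
        funext j
        by_cases hij : f i = j
        · rw [List.count_filter (by simpa using hij), if_pos hij,
            List.count_eq_one_of_mem (List.nodup_finRange _) (List.mem_finRange i)]
        · rw [if_neg hij, List.count_eq_zero]
          simp [hij]
      rw [hc, ← Fin.sum_univ_def, Finset.sum_ite_eq,
        List.count_eq_one_of_mem (List.nodup_finRange _) (List.mem_finRange i)]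
      simp
    have h2 := hperm.map μ.get
    rw [List.map_flatMap, List.map_get_finRange] at h2
    simpa [hrs, List.flatMap] using h2
  · -- sums
    rw [hrs, List.map_map]
    have : (List.sum ∘ fun j =>
        ((List.finRange μ.length).filter (fun i => f i = j)).map μ.get) = q.get := by
      funext j
      simp only [Function.comp]
      rw [hblock j, hf' j]
    rw [this, List.map_get_finRange]

end Descent
end

section
/- Let F be a field of prime characteristic p, n ≥ 1, and λ a p-regular partition of n. Then φ^{λ,F}(λ) ≠ 0 in F, and for every p-regular partition μ of n with φ^{μ,F}(λ) ≠ 0 one has λ ≼ μ. In other words, λ is the minimum, with respect to the weak refinement order ≼, of the set {μ ∈ Λ_p^+(n) : φ^{μ,F}(λ) ≠ 0}. -/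
open scoped Classical TensorProduct

namespace Descent

lemma length_filter_finRange {m : ℕ} (b : Fin m → Bool) :
    ((List.finRange m).filter b).length =
      (Finset.univ.filter (fun i => b i = true)).card := by
  rw [Finset.card_filter, Fin.sum_univ_def]
  induction List.finRange m with
  | nil => simp
  | cons a t ih =>
      by_cases h : b a = true <;>
        simp [List.filter_cons, h, ih] <;> omega

lemma sum_filter_finRange {m : ℕ} (b : Fin m → Bool) (g : Fin m → ℕ) :
    (((List.finRange m).filter b).map g).sum =
      ∑ i ∈ Finset.univ.filter (fun i => b i = true), g i := by
  rw [Finset.sum_filter, Fin.sum_univ_def]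
  induction List.finRange m with
  | nil => simp
  | cons a t ih =>
      by_cases h : b a = true <;>
        simp [List.filter_cons, h, ih]

lemma card_fiber (l : List ℕ) (v : ℕ) :
    Fintype.card {i : Fin l.length // l.get i = v} = l.count v := by
  rw [Fintype.card_subtype]
  conv_rhs => rw [← List.ofFn_get l, List.ofFn_eq_map]
  rw [List.count_eq_countP, List.countP_map, List.countP_eq_length_filter,
    length_filter_finRange]
  congr 1
  apply Finset.filter_congr
  intro i _
  simp [Function.comp]

lemma count_eq_card_filter (l : List ℕ) (a : ℕ) :
    l.count a = (Finset.univ.filter (fun i => l.get i = a)).card := by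
  conv_lhs => rw [← List.ofFn_get l, List.ofFn_eq_map]
  rw [List.count_eq_countP, List.countP_map, List.countP_eq_length_filter,
    length_filter_finRange]
  congr 1
  apply Finset.filter_congr
  intro i _
  simp [Function.comp]

lemma youngChar_self_eq (l : List ℕ) (hl : ∀ x ∈ l, 0 < x) :
    youngChar l l
      = Fintype.card {σ : Equiv.Perm (Fin l.length) // l.get ∘ ⇑σ = l.get} := by
  classical
  have hg : ∀ i, 0 < l.get i := fun i => hl _ (l.get_mem i)
  rw [youngChar, Fintype.card_subtype]
  have himg : (Finset.univ.filter (fun f : Fin l.length → Fin l.length =>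
        ∀ j : Fin l.length,
          (∑ i ∈ Finset.univ.filter (fun i => f i = j), l.get i) = l.get j))
      = (Finset.univ.filter
          (fun σ : Equiv.Perm (Fin l.length) => l.get ∘ ⇑σ = l.get)).image
            (fun σ : Equiv.Perm (Fin l.length) =>
              (σ : Fin l.length → Fin l.length)) := by
    ext f
    simp only [Finset.mem_filter, Finset.mem_image, Finset.mem_univ, true_and]
    constructor
    · intro hf
      have hsurj : Function.Surjective f := by
        intro j
        by_contra hc
        push_neg at hc
        have hemp : (Finset.univ.filter (fun i => f i = j)) = ∅ := by
          ext i; simp [hc i]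
        have h := hf j
        rw [hemp, Finset.sum_empty] at h
        have := hg j
        omega
      have hinj : Function.Injective f := Finite.injective_iff_surjective.mpr hsurj
      have hbij : Function.Bijective f := ⟨hinj, hsurj⟩
      refine ⟨Equiv.ofBijective f hbij, ?_, rfl⟩
      funext i
      show l.get (f i) = l.get i
      have h := hf (f i)
      have hfil : Finset.univ.filter (fun x => f x = f i) = {i} := by
        ext x; simp [hinj.eq_iff]
      rw [hfil, Finset.sum_singleton] at h
      exact h.symm
    · rintro ⟨σ, hσ, rfl⟩
      intro j
      have hfil : Finset.univ.filter (fun i => σ i = j) = {σ.symm j} := by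
        ext x
        simp [Equiv.eq_symm_apply]
      rw [hfil, Finset.sum_singleton]
      have h := congrFun hσ (σ.symm j)
      simpa using h.symm
  rw [himg, Finset.card_image_of_injective _ (fun a b h => Equiv.coe_fn_injective h)]

lemma not_dvd_youngChar_self (p : ℕ) (hp : p.Prime) (l : List ℕ)
    (hl : ∀ x ∈ l, 0 < x) (hreg : IsPRegular p l) : ¬ p ∣ youngChar l l := by
  classical
  rw [youngChar_self_eq l hl, DomMulAct.stabilizer_card' l.get]
  intro hdvd
  obtain ⟨v, hv, hdvd'⟩ := (hp.prime.dvd_finset_prod_iff _).mp hdvd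
  rw [card_fiber, Nat.Prime.dvd_factorial hp] at hdvd'
  obtain ⟨i, _, hi⟩ := Finset.mem_image.mp hv
  have := hreg v (hi ▸ l.get_mem i)
  omega

lemma weakRefinement_of_youngChar_ne_zero (lam μ : List ℕ)
    (h : youngChar μ lam ≠ 0) : IsWeakRefinement lam μ := by
  classical
  rw [youngChar] at h
  obtain ⟨f, hfmem⟩ := Finset.card_pos.mp (Nat.pos_of_ne_zero h)
  rw [Finset.mem_filter] at hfmem
  have hf := hfmem.2
  set blocks : Fin μ.length → List ℕ :=
    fun j => (((List.finRange lam.length).filter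
      (fun i => decide (f i = j))).map lam.get) with hblocks
  refine ⟨_, ?_, (List.finRange μ.length).map blocks, rfl, ?_⟩
  · rw [List.perm_iff_count]
    intro a
    rw [List.count_flatten, List.map_map]
    have hcount : List.count a ∘ blocks
        = fun j => (Finset.univ.filter (fun i => lam.get i = a ∧ f i = j)).card := by
      funext j
      show List.count a (blocks j) = _
      rw [hblocks]
      simp only
      rw [List.count_eq_countP, List.countP_map, List.countP_eq_length_filter,
        List.filter_filter, length_filter_finRange]
      congr 1
      apply Finset.filter_congr
      intro i _
      simp [Function.comp, and_comm]
    rw [hcount, ← Fin.sum_univ_def, count_eq_card_filter,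
      Finset.card_eq_sum_card_fiberwise (f := f) (t := Finset.univ)
        (fun x _ => Finset.mem_univ _)]
    apply Finset.sum_congr rfl
    intro j _
    rw [Finset.filter_filter]
  · rw [List.map_map]
    conv_rhs => rw [← List.ofFn_get μ, List.ofFn_eq_map]
    congr 1
    funext j
    show (blocks j).sum = μ.get j
    rw [hblocks]
    simp only
    rw [sum_filter_finRange]
    rw [show Finset.univ.filter (fun i => decide (f i = j) = true)
        = Finset.univ.filter (fun i => f i = j) from
      Finset.filter_congr (by intro i _; simp)]
    exact hf j

/-- Let `F` be a field of prime characteristic `p` and `λ` a `p`-regular partition of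
`n ≥ 1`.  Then `φ^{λ,F}(λ) ≠ 0` in `F`, and `λ` is the minimum, with respect to the weak
refinement order `≼`, of the set of `p`-regular partitions `μ` of `n` with
`φ^{μ,F}(λ) ≠ 0`. -/
theorem youngChar_self_ne_zero_and_min (F : Type) [Field F] (p : ℕ) (hp : p.Prime)
    [CharP F p] (n : ℕ) (hn : 1 ≤ n) (lam : List ℕ) (hlam : IsPartition n lam)
    (hreg : IsPRegular p lam) :
    ((youngChar lam lam : F) ≠ 0) ∧
      ∀ μ : List ℕ, IsPartition n μ → IsPRegular p μ → (youngChar μ lam : F) ≠ 0 →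
        IsWeakRefinement lam μ := by
  constructor
  · intro h0
    exact not_dvd_youngChar_self p hp lam hlam.1.1 hreg
      ((CharP.cast_eq_zero_iff F p _).mp h0)
  · intro μ _ _ hne
    exact weakRefinement_of_youngChar_ne_zero lam μ
      (fun h => hne (by rw [h, Nat.cast_zero]))


end Descent
end

section
/- Let n ≥ s ≥ 1, let μ be a partition of n−s, and let λ be the partition of n obtained by rearranging in decreasing order the parts of μ together with one extra part equal to s. Then for every composition q of n, Σ_{i : q_i ≥ s} φ^{q^{(i)}}(μ) = φ^{q}(λ), where the sum runs over the indices i with q_i ≥ s. (Equivalently: the pullback along Δ_s of the rank-one D_{n−s}(ℤ)-module M_{μ,ℤ} is isomorphic to M_{λ,ℤ}.) -/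
open scoped Classical TensorProduct

namespace Descent

/-- `q^{(i)}`: the result of subtracting `s` from the `i`-th part of `q`, this part being
deleted if it equals `s`. -/
def reduceAt (l : List ℕ) (i s : ℕ) : List ℕ :=
  l.take i ++ (if l.getD i 0 = s then [] else [l.getD i 0 - s]) ++ l.drop (i + 1)

noncomputable def cnt {m k : ℕ} (ν : Fin m → ℕ) (w : Fin k → ℕ) : ℕ :=
  (Finset.univ.filter (fun f : Fin m → Fin k =>
    ∀ j, (∑ i ∈ Finset.univ.filter (fun i => f i = j), ν i) = w j)).card

lemma youngChar_eq_cnt (q μ : List ℕ) :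
    youngChar q μ = cnt (fun i => μ.get i) (fun j => q.get j) := rfl

theorem exists_equiv_of_perm {α : Type*} {l1 l2 : List α} (h : l1.Perm l2) :
    ∃ e : Fin l1.length ≃ Fin l2.length, ∀ i, l1.get i = l2.get (e i) := by
  induction h with
  | nil => exact ⟨Equiv.refl _, fun i => i.elim0⟩
  | cons a h ih =>
    obtain ⟨e, he⟩ := ih
    refine ⟨(finSuccEquiv _).trans ((Equiv.optionCongr e).trans (finSuccEquiv _).symm), ?_⟩
    intro i
    refine Fin.cases ?_ (fun i => ?_) i
    · simp
    · simpa using he i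
  | swap x y l =>
    have hb : ∀ i : Fin (y :: x :: l).length,
        (if (i:ℕ) = 0 then 1 else if (i:ℕ) = 1 then 0 else (i:ℕ)) < (x :: y :: l).length := by
      intro i
      have := i.isLt
      simp only [List.length_cons] at this ⊢
      split_ifs <;> first | omega | simp_all
    have hb' : ∀ i : Fin (x :: y :: l).length,
        (if (i:ℕ) = 0 then 1 else if (i:ℕ) = 1 then 0 else (i:ℕ)) < (y :: x :: l).length := by
      intro i
      have := i.isLt
      simp only [List.length_cons] at this ⊢
      split_ifs <;> first | omega | simp_all
    refine ⟨⟨fun i => ⟨_, hb i⟩, fun i => ⟨_, hb' i⟩, ?_, ?_⟩, ?_⟩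
    · intro i
      ext
      simp only
      have := i.isLt
      simp only [List.length_cons] at this
      split_ifs <;> first | omega | simp_all
    · intro i
      ext
      simp only
      have := i.isLt
      simp only [List.length_cons] at this
      split_ifs <;> first | omega | simp_all
    · intro i
      obtain ⟨iv, hi⟩ := i
      match iv with
      | 0 => rfl
      | 1 => rfl
      | v+2 => rfl
  | trans h1 h2 ih1 ih2 =>
    obtain ⟨e1, he1⟩ := ih1
    obtain ⟨e2, he2⟩ := ih2
    exact ⟨e1.trans e2, fun i => (he1 i).trans (he2 _)⟩

lemma cnt_comp_left {m m' k : ℕ} (e : Fin m ≃ Fin m') (ν : Fin m' → ℕ) (w : Fin k → ℕ) :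
    cnt (fun i => ν (e i)) w = cnt ν w := by
  unfold cnt
  refine Finset.card_bij' (fun f _ => f ∘ e.symm) (fun g _ => g ∘ e) ?_ ?_ ?_ ?_
  · intro f hf
    simp only [Finset.mem_filter, Finset.mem_univ, true_and] at hf ⊢
    intro j
    rw [← hf j]
    refine (Finset.sum_equiv e ?_ ?_).symm
    · intro i; simp
    · intro i _; rfl
  · intro g hg
    simp only [Finset.mem_filter, Finset.mem_univ, true_and] at hg ⊢
    intro j
    rw [← hg j]
    refine Finset.sum_equiv e ?_ ?_
    · intro i; simp
    · intro i _; rfl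
  · intro f _; funext i; simp
  · intro g _; funext i; simp

lemma cnt_comp_right {m k k' : ℕ} (e : Fin k ≃ Fin k') (ν : Fin m → ℕ) (w : Fin k' → ℕ) :
    cnt ν (fun j => w (e j)) = cnt ν w := by
  unfold cnt
  refine Finset.card_bij' (fun f _ => e ∘ f) (fun g _ => e.symm ∘ g) ?_ ?_ ?_ ?_
  · intro f hf
    simp only [Finset.mem_filter, Finset.mem_univ, true_and] at hf ⊢
    intro j'
    have h2 := hf (e.symm j')
    rw [Equiv.apply_symm_apply] at h2
    rw [← h2]
    apply Finset.sum_congr _ (fun _ _ => rfl)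
    apply Finset.filter_congr
    intro i _
    simp [Function.comp, Equiv.eq_symm_apply, eq_comm]
  · intro g hg
    simp only [Finset.mem_filter, Finset.mem_univ, true_and] at hg ⊢
    intro j
    rw [← hg (e j)]
    apply Finset.sum_congr _ (fun _ _ => rfl)
    apply Finset.filter_congr
    intro i _
    simp [Function.comp, Equiv.symm_apply_eq]
  · intro f _; funext i; simp
  · intro g _; funext i; simp

lemma sum_snoc_filter {m k : ℕ} (s : ℕ) (ν : Fin m → ℕ) (f : Fin (m+1) → Fin k) (j' : Fin k) :
    (∑ i ∈ Finset.univ.filter (fun i => f i = j'), Fin.snoc ν s i)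
    = (∑ i ∈ Finset.univ.filter (fun i => f i.castSucc = j'), ν i)
      + (if f (Fin.last m) = j' then s else 0) := by
  rw [Finset.sum_filter, Finset.sum_filter, Fin.sum_univ_castSucc]
  simp

lemma cnt_snoc {m k s : ℕ} (ν : Fin m → ℕ) (w : Fin k → ℕ) :
    cnt (Fin.snoc ν s) w =
      ∑ j ∈ Finset.univ.filter (fun j => s ≤ w j), cnt ν (Function.update w j (w j - s)) := by
  have key : ∀ j : Fin k,
      ((Finset.univ.filter (fun f : Fin (m+1) → Fin k =>
        ∀ j', (∑ i ∈ Finset.univ.filter (fun i => f i = j'), Fin.snoc ν s i) = w j')).filter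
        (fun f => f (Fin.last m) = j)).card
      = if s ≤ w j then cnt ν (Function.update w j (w j - s)) else 0 := by
    intro j
    split_ifs with hs
    · unfold cnt
      refine Finset.card_bij' (fun f _ => fun i => f i.castSucc) (fun g _ => Fin.snoc g j) ?_ ?_ ?_ ?_
      · intro f hf
        simp only [Finset.mem_filter, Finset.mem_univ, true_and] at hf ⊢
        obtain ⟨hcond, hlast⟩ := hf
        intro j'
        have h1 := hcond j'
        rw [sum_snoc_filter, hlast] at h1
        rcases eq_or_ne j' j with rfl | hne
        · rw [if_pos rfl] at h1
          rw [Function.update_self]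
          omega
        · rw [if_neg (Ne.symm hne), add_zero] at h1
          rw [Function.update_of_ne hne]
          exact h1
      · intro g hg
        simp only [Finset.mem_filter, Finset.mem_univ, true_and] at hg ⊢
        constructor
        · intro j'
          rw [sum_snoc_filter]
          simp only [Fin.snoc_castSucc, Fin.snoc_last]
          have h1 := hg j'
          rcases eq_or_ne j' j with rfl | hne
          · rw [Function.update_self] at h1
            rw [h1, if_pos rfl]
            omega
          · rw [Function.update_of_ne hne] at h1
            rw [h1, if_neg (Ne.symm hne), add_zero]
        · simp
      · intro f hf
        simp only [Finset.mem_filter, Finset.mem_univ, true_and] at hf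
        funext i
        refine Fin.lastCases ?_ (fun i => ?_) i
        · simp [hf.2]
        · simp
      · intro g _
        funext i
        simp
    · rw [Finset.card_eq_zero, Finset.eq_empty_iff_forall_notMem]
      intro f hf
      simp only [Finset.mem_filter, Finset.mem_univ, true_and] at hf
      obtain ⟨hcond, hlast⟩ := hf
      have h1 := hcond j
      rw [sum_snoc_filter, if_pos hlast] at h1
      omega
  unfold cnt
  rw [Finset.card_eq_sum_card_fiberwise
    (f := fun f : Fin (m+1) → Fin k => f (Fin.last m)) (t := Finset.univ)
    (fun f _ => Finset.mem_univ _)]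
  rw [Finset.sum_congr rfl (fun j _ => key j)]
  exact (Finset.sum_filter _ _).symm

def skip {k : ℕ} (j : Fin k) (l : Fin (k-1)) : Fin k :=
  ⟨if (l : ℕ) < (j : ℕ) then (l : ℕ) else (l : ℕ) + 1, by
    have h1 := l.isLt; have h2 := j.isLt; split_ifs <;> omega⟩

lemma skip_ne {k : ℕ} (j : Fin k) (l : Fin (k-1)) : skip j l ≠ j := by
  unfold skip
  intro h
  rw [Fin.ext_iff] at h
  simp only at h
  split_ifs at h <;> omega

lemma skip_injective {k : ℕ} (j : Fin k) : Function.Injective (skip j) := by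
  intro a b hab
  rw [Fin.ext_iff] at hab ⊢
  unfold skip at hab
  simp only at hab
  split_ifs at hab <;> omega

lemma skip_surj {k : ℕ} (j j' : Fin k) (h : j' ≠ j) : ∃ l, skip j l = j' := by
  have hk := j.isLt
  have hne : (j' : ℕ) ≠ (j : ℕ) := fun hc => h (Fin.ext hc)
  rcases lt_or_gt_of_ne hne with hlt | hgt
  · exact ⟨⟨j', by omega⟩, by unfold skip; rw [Fin.ext_iff]; simp [hlt]⟩
  · refine ⟨⟨(j' : ℕ) - 1, by have := j'.isLt; omega⟩, ?_⟩
    unfold skip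
    rw [Fin.ext_iff]
    simp only
    rw [if_neg (by omega)]
    omega

lemma cnt_delete {m k : ℕ} (ν : Fin m → ℕ) (hν : ∀ i, 0 < ν i) (w : Fin k → ℕ)
    (j : Fin k) (hj : w j = 0) :
    cnt ν w = cnt ν (fun l : Fin (k-1) => w (skip j l)) := by
  unfold cnt
  symm
  refine Finset.card_bij (fun g _ => skip j ∘ g) ?_ ?_ ?_
  · intro g hg
    simp only [Finset.mem_filter, Finset.mem_univ, true_and] at hg ⊢
    intro j'
    rcases eq_or_ne j' j with rfl | hne
    · rw [hj]
      rw [Finset.sum_eq_zero_iff]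
      intro i hi
      simp only [Finset.mem_filter, Finset.mem_univ, true_and, Function.comp] at hi
      exact absurd hi (skip_ne _ (g i))
    · obtain ⟨l, hl⟩ := skip_surj j j' hne
      have h1 := hg l
      rw [← hl, ← h1]
      apply Finset.sum_congr _ (fun _ _ => rfl)
      apply Finset.filter_congr
      intro i _
      simp only [Function.comp]
      exact ⟨fun hc => by rw [skip_injective j hc], fun hc => by rw [hc]⟩
  · intro g1 h1 g2 h2 hgg
    funext i
    exact skip_injective j (congrFun hgg i)
  · intro f hf
    simp only [Finset.mem_filter, Finset.mem_univ, true_and] at hf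
    have hne : ∀ i, f i ≠ j := by
      intro i hc
      have h1 := hf j
      rw [hj, Finset.sum_eq_zero_iff] at h1
      have h2 := h1 i (by simp [hc])
      have := hν i
      omega
    choose g hg using fun i => skip_surj j (f i) (hne i)
    refine ⟨g, ?_, ?_⟩
    · simp only [Finset.mem_filter, Finset.mem_univ, true_and]
      intro l
      have h1 := hf (skip j l)
      rw [← h1]
      apply Finset.sum_congr _ (fun _ _ => rfl)
      apply Finset.filter_congr
      intro i _
      rw [← hg i]
      exact ⟨fun hc => by rw [hc], fun hc => skip_injective j hc⟩
    · funext i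
      simp [Function.comp, hg i]

lemma reduceAt_eq_set (q : List ℕ) (i s : ℕ) (hi : i < q.length) (hs : q.getD i 0 ≠ s) :
    reduceAt q i s = q.set i (q[i] - s) := by
  unfold reduceAt
  rw [if_neg hs, List.set_eq_take_cons_drop _ hi, List.getD_eq_getElem _ _ hi]
  simp

-- Case B : q_i = s

lemma reduceAt_eq_eraseIdx (q : List ℕ) (i s : ℕ) (hs : q.getD i 0 = s) :
    reduceAt q i s = q.eraseIdx i := by
  unfold reduceAt
  rw [if_pos hs, List.eraseIdx_eq_take_drop_succ]
  simp

lemma reduceAt_cnt (q μ : List ℕ) (s : ℕ) (hμpos : ∀ x ∈ μ, 0 < x)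
    (i : ℕ) (hi : i < q.length) (hs : s ≤ q.getD i 0) :
    youngChar (reduceAt q i s) μ
      = cnt (fun l => μ.get l)
          (Function.update (fun j => q.get j) ⟨i, hi⟩ (q.getD i 0 - s)) := by
  rcases eq_or_ne (q.getD i 0) s with hqs | hqs
  · -- deletion case
    rw [reduceAt_eq_eraseIdx q i s hqs, youngChar_eq_cnt]
    have hlen : (q.eraseIdx i).length = q.length - 1 := by
      rw [List.length_eraseIdx]; simp [hi]
    have hupd0 : (Function.update (fun j => q.get j) ⟨i, hi⟩ (q.getD i 0 - s)) ⟨i, hi⟩ = 0 := by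
      rw [Function.update_self]; omega
    rw [cnt_delete (fun l => μ.get l) (fun l => hμpos _ (List.get_mem μ l)) _ ⟨i, hi⟩ hupd0]
    have : (fun j : Fin (q.eraseIdx i).length => (q.eraseIdx i).get j)
        = fun j => (fun l : Fin (q.length - 1) =>
            Function.update (fun j => q.get j) ⟨i, hi⟩ (q.getD i 0 - s) (skip ⟨i, hi⟩ l))
          (finCongr hlen j) := by
      funext j
      show (q.eraseIdx i).get j = Function.update (fun j => q.get j) ⟨i, hi⟩ (q.getD i 0 - s)
        (skip ⟨i, hi⟩ (finCongr hlen j))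
      have hj1 : (j : ℕ) < q.length - 1 := hlen ▸ j.isLt
      rw [Function.update_of_ne (skip_ne _ _)]
      simp only [List.get_eq_getElem, finCongr_apply, Fin.coe_cast]
      unfold skip
      simp only [Fin.coe_cast]
      rw [List.getElem_eraseIdx]
      split_ifs <;> rfl
    rw [this]
    exact cnt_comp_right (finCongr hlen) (fun l => μ.get l)
      (fun l => Function.update (fun j => q.get j) ⟨i, hi⟩ (q.getD i 0 - s) (skip ⟨i, hi⟩ l))
  · -- set case
    rw [reduceAt_eq_set q i s hi hqs, youngChar_eq_cnt]
    have hlen : (q.set i (q[i] - s)).length = q.length := by simp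
    have : (fun j : Fin (q.set i (q[i] - s)).length => (q.set i (q[i] - s)).get j)
        = fun j => (Function.update (fun j => q.get j) ⟨i, hi⟩ (q.getD i 0 - s))
            (finCongr hlen j) := by
      funext j
      have hj1 : (j : ℕ) < q.length := hlen ▸ j.isLt
      simp only [List.get_eq_getElem, finCongr_apply, Fin.coe_cast, Function.update_apply]
      rw [List.getElem_set]
      rw [List.getD_eq_getElem _ _ hi]
      have : ((Fin.cast hlen j : Fin q.length) = ⟨i, hi⟩) ↔ (i = (j : ℕ)) := by
        rw [Fin.ext_iff]; simp [eq_comm]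
      rw [if_congr this rfl rfl]
    rw [this]
    exact cnt_comp_right (finCongr hlen) (fun l => μ.get l)
      (Function.update (fun j => q.get j) ⟨i, hi⟩ (q.getD i 0 - s))

lemma get_append_single (μ : List ℕ) (s : ℕ) (hlen : (μ ++ [s]).length = μ.length + 1) :
    (fun j : Fin (μ ++ [s]).length => (μ ++ [s]).get j)
      = fun j => (Fin.snoc (fun i => μ.get i) s : Fin (μ.length + 1) → ℕ)
          (finCongr hlen j) := by
  funext j
  have hj := j.isLt
  rcases Nat.lt_or_ge (j : ℕ) μ.length with h | h
  · rw [show (finCongr hlen j) = Fin.castSucc ⟨(j : ℕ), h⟩ from Fin.ext (by simp),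
      Fin.snoc_castSucc]
    simp only [List.get_eq_getElem]
    exact List.getElem_append_left h
  · have hje : (j : ℕ) = μ.length := by simp at hj; omega
    rw [show (finCongr hlen j) = Fin.last μ.length from Fin.ext (by simp [hje]),
      Fin.snoc_last]
    simp only [List.get_eq_getElem]
    have : (μ ++ [s])[(j : ℕ)] = (μ ++ [s])[μ.length]'(by simp) := by
      congr 1
    rw [this]
    simp

/-- Let `n ≥ s ≥ 1`, `μ` a partition of `n - s`, and `λ` the partition of `n` obtained by
rearranging in decreasing order the parts of `μ` together with one extra part equal to `s`.
Then for every composition `q` of `n`, `Σ_{i : q_i ≥ s} φ^{q^{(i)}}(μ) = φ^q(λ)`. -/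
theorem sum_youngChar_reduceAt (n s : ℕ) (hs : 1 ≤ s) (hn : s ≤ n) (μ lam : List ℕ)
    (hμ : IsPartition (n - s) μ) (hlam : IsPartition n lam)
    (hperm : lam.Perm (μ ++ [s])) :
    ∀ q : List ℕ, IsComposition n q →
      (∑ i ∈ (Finset.range q.length).filter (fun i => s ≤ q.getD i 0),
        youngChar (reduceAt q i s) μ) = youngChar q lam := by
  intro q hq
  have hμpos : ∀ x ∈ μ, 0 < x := hμ.1.1
  have hlen : (μ ++ [s]).length = μ.length + 1 := by simp
  obtain ⟨e, he⟩ := exists_equiv_of_perm hperm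
  have h1 : youngChar q lam
      = cnt (Fin.snoc (fun i => μ.get i) s : Fin (μ.length + 1) → ℕ) (fun j => q.get j) := by
    rw [youngChar_eq_cnt]
    have h2 : (fun i : Fin lam.length => lam.get i)
        = fun i => (Fin.snoc (fun i => μ.get i) s : Fin (μ.length + 1) → ℕ)
            ((e.trans (finCongr hlen)) i) := by
      funext i
      exact (he i).trans (congrFun (get_append_single μ s hlen) (e i))
    rw [h2]
    exact cnt_comp_left (e.trans (finCongr hlen)) _ _
  rw [h1, cnt_snoc]
  refine Finset.sum_bij (fun i hi => (⟨i, by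
      simp only [Finset.mem_filter, Finset.mem_range] at hi; exact hi.1⟩ : Fin q.length))
    ?_ ?_ ?_ ?_
  · intro i hi
    simp only [Finset.mem_filter, Finset.mem_range] at hi ⊢
    refine ⟨Finset.mem_univ _, ?_⟩
    have h3 := hi.2
    rw [List.getD_eq_getElem q 0 hi.1] at h3
    exact h3
  · intro i1 h1 i2 h2 h12
    have := congrArg Fin.val h12
    simpa using this
  · intro j hj
    simp only [Finset.mem_filter, Finset.mem_univ, true_and] at hj
    refine ⟨(j : ℕ), ?_, Fin.ext rfl⟩
    simp only [Finset.mem_filter, Finset.mem_range]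
    refine ⟨j.isLt, ?_⟩
    rw [List.getD_eq_getElem q 0 j.isLt]
    exact hj
  · intro i hi
    simp only [Finset.mem_filter, Finset.mem_range] at hi
    rw [reduceAt_cnt q μ s hμpos i hi.1 hi.2]
    exact congrArg (fun v => cnt (fun l => μ.get l)
      (Function.update (fun j => q.get j) ⟨i, hi.1⟩ (v - s))) (List.getD_eq_getElem q 0 hi.1)

end Descent
end

section
/- Fix a prime p and an integer s ≥ 1. The map μ ↦ μ^{#s} on p-regular partitions is injective: if μ and η are p-regular partitions of the same integer n with μ^{#s} = η^{#s}, then μ = η. -/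
open scoped Classical TensorProduct

namespace Descent

/-- The multiset obtained from a partition by replacing every part `m = p^a·m′` with
`p ∤ m′` by `p^a` copies of `m′`. -/
def pExpand (p : ℕ) (l : List ℕ) : Multiset ℕ :=
  (l : Multiset ℕ).bind fun m =>
    Multiset.replicate (p ^ (m.factorization p)) (m / p ^ (m.factorization p))

/-- `p`-equivalence of partitions, `λ ∼_p μ`. -/
def PEquiv (p : ℕ) (l₁ l₂ : List ℕ) : Prop :=
  pExpand p l₁ = pExpand p l₂



lemma digit_lt (p N a b : ℕ) (hp : 0 < p) (hab : a < b) :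
    (N + p^b) / p^a % p = N / p^a % p := by
  have h : p^b = p^a * p^(b-a) := by rw [← pow_add]; congr 1; omega
  rw [h, Nat.add_mul_div_left _ _ (pow_pos hp a)]
  have h2 : p^(b-a) = p^(b-a-1) * p := by rw [← pow_succ]; congr 1; omega
  rw [h2]
  exact Nat.add_mul_mod_self_right _ _ _

lemma digit_eq (p N a : ℕ) (hp : 2 ≤ p) (hd : N / p^a % p < p - 1) :
    (N + p^a) / p^a % p = N / p^a % p + 1 := by
  rw [Nat.add_div_right _ (pow_pos (by omega) a)]
  set q := N / p^a
  rw [Nat.add_mod, Nat.one_mod_eq_one.mpr (by omega)]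
  exact Nat.mod_eq_of_lt (by omega)

lemma digit_gt (p N a b : ℕ) (hp : 2 ≤ p) (hab : b < a) (hd : N / p^b % p < p - 1) :
    (N + p^b) / p^a % p = N / p^a % p := by
  have hpb : 0 < p^b := pow_pos (by omega) b
  have hps : (0:ℕ) < p^(b+1) := pow_pos (by omega) (b+1)
  set q := N / p^(b+1) with hq
  set r := N % p^(b+1) with hr
  have hN : p^(b+1) * q + r = N := Nat.div_add_mod N (p^(b+1))
  have hrd : r / p^b = N / p^b % p := by
    rw [hr, pow_succ]; exact Nat.mod_mul_right_div_self N (p^b) p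
  have hrlt : r + p^b < p^(b+1) := by
    have h0 : r / p^b < p - 1 := by rw [hrd]; exact hd
    have h1 : r < (p-1) * p^b := (Nat.div_lt_iff_lt_mul hpb).mp h0
    have h2 : (p-1)*p^b + 1*p^b = p*p^b := by rw [← add_mul]; congr 1; omega
    have h3 : p^(b+1) = p*p^b := by rw [pow_succ, mul_comm]
    omega
  have key : (N + p^b) / p^(b+1) = N / p^(b+1) := by
    have h1 : N + p^b = p^(b+1) * q + (r + p^b) := by omega
    rw [h1, Nat.mul_add_div hps, Nat.div_eq_of_lt hrlt, ← hq, Nat.add_zero]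
  have hpa : p^a = p^(b+1) * p^(a-b-1) := by rw [← pow_add]; congr 1; omega
  rw [hpa, ← Nat.div_div_eq_div_mul, ← Nat.div_div_eq_div_mul, key]



lemma fact_pow_mul {p m' : ℕ} (hp : p.Prime) (hm : ¬ p ∣ m') (a : ℕ) :
    (p^a * m').factorization p = a := by
  have hm0 : m' ≠ 0 := fun h => hm (h ▸ dvd_zero p)
  rw [Nat.factorization_mul (pow_ne_zero a hp.pos.ne') hm0]
  simp [hp.factorization_pow, Nat.factorization_eq_zero_of_not_dvd hm]

lemma core_pow_mul {p m' : ℕ} (hp : p.Prime) (a : ℕ) :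
    (p^a * m') / p^a = m' := Nat.mul_div_cancel_left m' (pow_pos hp.pos a)

lemma count_pExpand {p : ℕ} (hp : p.Prime) :
    ∀ (l : List ℕ), (∀ x ∈ l, 0 < x) → IsPRegular p l →
    ∀ m' a, ¬ p ∣ m' →
      l.count (p^a * m') = (pExpand p l).count m' / p^a % p := by
  intro l
  induction l with
  | nil => intro _ _ m' a _; simp [pExpand]
  | cons x t IH =>
    intro hpos hreg m' a hm
    have hp2 : 2 ≤ p := hp.two_le
    have hx : 0 < x := hpos x List.mem_cons_self
    have htpos : ∀ y ∈ t, 0 < y := fun y hy => hpos y (List.mem_cons_of_mem _ hy)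
    have htreg : IsPRegular p t := fun y hy =>
      lt_of_le_of_lt ((List.sublist_cons_self x t).count_le y)
        (hreg y (List.mem_cons_of_mem _ hy))
    have hm0 : m' ≠ 0 := fun h => hm (h ▸ dvd_zero p)
    set b := x.factorization p with hb
    set c := x / p^b with hc
    have hxbc : p^b * c = x := Nat.ordProj_mul_ordCompl_eq_self x p
    have hcd : ¬ p ∣ c := Nat.not_dvd_ordCompl hp hx.ne'
    set N := (pExpand p t).count m' with hN
    have hcount : (pExpand p (x :: t)).count m' = (if c = m' then p^b else 0) + N := by
      show ((x ::ₘ (t : Multiset ℕ)).bind _).count m' = _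
      rw [Multiset.cons_bind, Multiset.count_add, Multiset.count_replicate]
      rfl
    have IH' : ∀ a', t.count (p^a' * m') = N / p^a' % p :=
      fun a' => IH htpos htreg m' a' hm
    by_cases hcm : c = m'
    · -- x = p^b * m'
      have hxeq : x = p^b * m' := by rw [← hxbc, hcm]
      rw [hcount, if_pos hcm]
      have hxcnt : (x :: t).count x = t.count x + 1 := by simp
      have hxlt : t.count (p^b * m') < p - 1 := by
        have := hreg x List.mem_cons_self
        rw [hxcnt] at this
        rw [← hxeq]; omega
      rcases lt_trichotomy a b with h | h | h
      · have hne : x ≠ p^a * m' := by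
          intro he
          rw [hxeq] at he
          have h2 : p^b = p^a := Nat.eq_of_mul_eq_mul_right (Nat.pos_of_ne_zero hm0) he
          exact absurd (Nat.pow_right_injective hp2 h2) (by omega)
        rw [List.count_cons, if_neg (by simp only [beq_iff_eq]; exact hne),
          Nat.add_comm (p^b) N, digit_lt p N a b hp.pos h, Nat.add_zero]
        exact IH' a
      · subst h
        rw [List.count_cons, if_pos (by simp only [beq_iff_eq]; exact hxeq),
          Nat.add_comm (p^b) N, digit_eq p N b hp2 (by rw [← IH' b]; exact hxlt)]
        rw [IH' b]
      · have hne : x ≠ p^a * m' := by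
          intro he
          rw [hxeq] at he
          have h2 : p^b = p^a := Nat.eq_of_mul_eq_mul_right (Nat.pos_of_ne_zero hm0) he
          exact absurd (Nat.pow_right_injective hp2 h2) (by omega)
        rw [List.count_cons, if_neg (by simp only [beq_iff_eq]; exact hne),
          Nat.add_comm (p^b) N, digit_gt p N a b hp2 h (by rw [← IH' b]; exact hxlt),
          Nat.add_zero]
        exact IH' a
    · -- core of x differs from m'
      have hne : x ≠ p^a * m' := by
        intro he
        apply hcm
        rw [hc, he, hb, he, fact_pow_mul hp hm, core_pow_mul hp]
      rw [hcount, if_neg hcm, Nat.zero_add, List.count_cons, if_neg (by simp only [beq_iff_eq]; exact hne)]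
      simpa using IH' a

lemma pExpand_append (p : ℕ) (l₁ l₂ : List ℕ) :
    pExpand p (l₁ ++ l₂) = pExpand p l₁ + pExpand p l₂ := by
  unfold pExpand
  rw [← Multiset.coe_add, Multiset.add_bind]

lemma eq_of_pExpand_eq {p : ℕ} (hp : p.Prime) {l₁ l₂ : List ℕ}
    (h₁pos : ∀ x ∈ l₁, 0 < x) (h₂pos : ∀ x ∈ l₂, 0 < x)
    (h₁reg : IsPRegular p l₁) (h₂reg : IsPRegular p l₂)
    (h₁s : l₁.Pairwise (· ≥ ·)) (h₂s : l₂.Pairwise (· ≥ ·))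
    (hE : pExpand p l₁ = pExpand p l₂) : l₁ = l₂ := by
  refine List.Perm.eq_of_pairwise (fun a b _ _ h h' => le_antisymm h' h) h₁s h₂s (List.perm_iff_count.mpr fun x => ?_)
  rcases Nat.eq_zero_or_pos x with hx | hx
  · subst hx
    rw [List.count_eq_zero_of_not_mem (fun hm => lt_irrefl 0 (h₁pos 0 hm)),
      List.count_eq_zero_of_not_mem (fun hm => lt_irrefl 0 (h₂pos 0 hm))]
  · have hxbc : p ^ (x.factorization p) * (x / p ^ (x.factorization p)) = x :=
      Nat.ordProj_mul_ordCompl_eq_self x p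
    have hcd : ¬ p ∣ x / p ^ (x.factorization p) := Nat.not_dvd_ordCompl hp hx.ne'
    rw [← hxbc, count_pExpand hp l₁ h₁pos h₁reg _ _ hcd,
      count_pExpand hp l₂ h₂pos h₂reg _ _ hcd, hE]

/-- Fix a prime `p` and `s ≥ 1`.  The map `μ ↦ μ^{#s}` on `p`-regular partitions is
injective: if `μ` and `η` are `p`-regular partitions of the same integer `n` whose
`#s`-images agree (i.e. some `p`-regular partition `ν` is `p`-equivalent both to `μ` with
an extra part `s` added and to `η` with an extra part `s` added), then `μ = η`. -/
theorem sharp_injective (p : ℕ) (hp : p.Prime) (s : ℕ) (hs : 1 ≤ s) (n : ℕ)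
    (μ η : List ℕ) (hμ : IsPartition n μ) (hη : IsPartition n η)
    (hμreg : IsPRegular p μ) (hηreg : IsPRegular p η)
    (ν : List ℕ) (hν : IsPartition (n + s) ν) (hνreg : IsPRegular p ν)
    (h1 : PEquiv p ν (μ ++ [s])) (h2 : PEquiv p ν (η ++ [s])) :
    μ = η := by
  have key : PEquiv p μ η := by
    have h3 : pExpand p μ + pExpand p [s] = pExpand p η + pExpand p [s] := by
      rw [← pExpand_append, ← pExpand_append, ← h1, ← h2]
    exact add_right_cancel h3
  exact eq_of_pExpand_eq hp hμ.1.1 hη.1.1 hμreg hηreg hμ.2 hη.2 key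

end Descent
end
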